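/- Let S be a complex symmetric n×n matrix and π a partial involution matrix. If S lies in the Zariski closure of the congruence B-orbit of π, then rank(S_{kℓ}) ≤ rank(π_{kℓ}) for all 1 ≤ k, ℓ ≤ n. -/

import Mathlib

open Matrix

/-- The upper-left `k × l` corner of a matrix (truncated at the matrix size). -/
def cornerSub {F : Type*} {n m : ℕ} (X : Matrix (Fin n) (Fin m) F) (k l : ℕ) :
    Matrix (Fin (min k n)) (Fin (min l m)) F :=
  X.submatrix (Fin.castLE (min_le_right k n)) (Fin.castLE (min_le_right l m))

/-- The `(k, l)` entry of the rank-control matrix. -/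
noncomputable def rcEntry {F : Type*} [Field F] {n m : ℕ}
    (X : Matrix (Fin n) (Fin m) F) (k l : ℕ) : ℕ :=
  (cornerSub X k l).rank

/-- The Zariski topology on the space of `n × n` complex matrices. -/
def zariskiT (n : ℕ) : TopologicalSpace (Matrix (Fin n) (Fin n) ℂ) :=
  TopologicalSpace.generateFrom
    { U | ∃ p : MvPolynomial (Fin n × Fin n) ℂ,
        U = { M | MvPolynomial.eval (fun ij => M ij.1 ij.2) p ≠ 0 } }

/-- A partial permutation matrix. -/
def IsPartialPermMatrix {n : ℕ} (X : Matrix (Fin n) (Fin n) ℂ) : Prop :=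
  (∀ i j, X i j = 0 ∨ X i j = 1) ∧
    (∀ i, {j | X i j = 1}.Subsingleton) ∧
    (∀ j, {i | X i j = 1}.Subsingleton)

/-- The congruence B-orbit of `π`. -/
def congOrbit {n : ℕ} (π : Matrix (Fin n) (Fin n) ℂ) :
    Set (Matrix (Fin n) (Fin n) ℂ) :=
  { S | ∃ B : Matrix (Fin n) (Fin n) ℂ,
      IsUnit B.det ∧ (∀ i j : Fin n, j < i → B i j = 0) ∧ S = Bᵀ * π * B }

/-- Sum over `Fin n` restricts to `Fin k` when the function vanishes above `k`. -/
lemma sum_fin_castLE {n k : ℕ} (h : k ≤ n) (f : Fin n → ℂ)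
    (hf : ∀ a : Fin n, k ≤ (a : ℕ) → f a = 0) :
    ∑ a, f a = ∑ a : Fin k, f (Fin.castLE h a) := by
  classical
  calc ∑ a, f a = ∑ a ∈ Finset.univ.map ⟨Fin.castLE h, Fin.castLE_injective h⟩, f a := by
        symm
        apply Finset.sum_subset (Finset.subset_univ _)
        intro x _ hx
        apply hf
        by_contra hlt
        push_neg at hlt
        exact hx (Finset.mem_map.2 ⟨⟨(x : ℕ), hlt⟩, Finset.mem_univ _, rfl⟩)
    _ = ∑ a : Fin k, f (Fin.castLE h a) := Finset.sum_map _ _ _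

lemma rank_submatrix_le_rows {a b c : ℕ} (X : Matrix (Fin a) (Fin b) ℂ)
    (f : Fin c → Fin a) : (X.submatrix f id).rank ≤ X.rank := by
  rw [rank_eq_finrank_span_row, rank_eq_finrank_span_row]
  apply Submodule.finrank_mono
  apply Submodule.span_mono
  rintro _ ⟨i, rfl⟩
  exact ⟨f i, rfl⟩

lemma rank_submatrix_le_gen {a b c d : ℕ} (X : Matrix (Fin a) (Fin b) ℂ)
    (f : Fin c → Fin a) (g : Fin d → Fin b) : (X.submatrix f g).rank ≤ X.rank := by
  have h1 : (X.submatrix id g).submatrix f id = X.submatrix f g := by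
    rw [submatrix_submatrix]; rfl
  calc (X.submatrix f g).rank = ((X.submatrix id g).submatrix f id).rank := by rw [h1]
    _ ≤ (X.submatrix id g).rank := rank_submatrix_le_rows _ f
    _ = ((X.submatrix id g)ᵀ).rank := (rank_transpose _).symm
    _ = (Xᵀ.submatrix g id).rank := by rw [transpose_submatrix]
    _ ≤ Xᵀ.rank := rank_submatrix_le_rows _ g
    _ = X.rank := rank_transpose X

lemma exists_indep_rows {a b : ℕ} (X : Matrix (Fin a) (Fin b) ℂ) (s : ℕ)
    (h : s ≤ X.rank) : ∃ f : Fin s → Fin a, LinearIndependent ℂ (fun i => X (f i)) := by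
  classical
  obtain ⟨t, hts, hspan, hli⟩ := exists_linearIndependent ℂ (Set.range X)
  have hfin : t.Finite := hli.set_finite_of_isNoetherian
  haveI := hfin.fintype
  have h1 : X.rank = Module.finrank ℂ (Submodule.span ℂ t) := by
    rw [rank_eq_finrank_span_row, hspan]; rfl
  have h2 := finrank_span_set_eq_card hli
  rw [h1, h2] at h
  have hcards : s ≤ Fintype.card t := by rwa [Set.toFinset_card] at h
  let e : Fin s → t := fun i => (Fintype.equivFin t).symm (Fin.castLE hcards i)
  have he : Function.Injective e :=
    (Fintype.equivFin t).symm.injective.comp (Fin.castLE_injective hcards)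
  have hsel : ∀ i : Fin s, ∃ j : Fin a, X j = (e i : Fin b → ℂ) := fun i => hts (e i).2
  choose f hf using hsel
  refine ⟨f, ?_⟩
  have : (fun i => X (f i)) = (fun v : t => (v : Fin b → ℂ)) ∘ e := by
    funext i; exact hf i
  rw [this]
  exact hli.comp e he

lemma minors_vanish {a b r : ℕ} (X : Matrix (Fin a) (Fin b) ℂ) (h : X.rank ≤ r)
    (f : Fin (r+1) → Fin a) (g : Fin (r+1) → Fin b) : (X.submatrix f g).det = 0 := by
  by_contra hd
  have hu : IsUnit (X.submatrix f g) :=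
    (Matrix.isUnit_iff_isUnit_det _).mpr (isUnit_iff_ne_zero.mpr hd)
  have h1 := Matrix.rank_of_isUnit _ hu
  have h2 := rank_submatrix_le_gen X f g
  rw [h1] at h2
  simp [Fintype.card_fin] at h2
  omega

lemma rank_le_of_minors {a b r : ℕ} (X : Matrix (Fin a) (Fin b) ℂ)
    (h : ∀ (f : Fin (r+1) → Fin a) (g : Fin (r+1) → Fin b), (X.submatrix f g).det = 0) :
    X.rank ≤ r := by
  by_contra h'
  push_neg at h'
  obtain ⟨g, hg⟩ := exists_indep_rows Xᵀ (r+1) (by rw [rank_transpose]; omega)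
  have hM : (Xᵀ.submatrix g id).rank = r + 1 := by
    have : LinearIndependent ℂ (fun i => (Xᵀ.submatrix g id) i) := hg
    rw [LinearIndependent.rank_matrix (M := Xᵀ.submatrix g id) this, Fintype.card_fin]
  obtain ⟨f, hf⟩ := exists_indep_rows (Xᵀ.submatrix g id)ᵀ (r+1) (by rw [rank_transpose, hM])
  have hN : LinearIndependent ℂ (fun i => ((Xᵀ.submatrix g id)ᵀ.submatrix f id) i) := hf
  have hu : IsUnit ((Xᵀ.submatrix g id)ᵀ.submatrix f id) :=
    Matrix.linearIndependent_rows_iff_isUnit.mp hN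
  have heq : (Xᵀ.submatrix g id)ᵀ.submatrix f id = X.submatrix f g := by
    rw [transpose_submatrix, transpose_transpose, submatrix_submatrix]; rfl
  rw [heq] at hu
  exact absurd ((Matrix.isUnit_iff_isUnit_det _).mp hu) (by simp [h f g])

/-- The polynomial computing a minor of a matrix. -/
noncomputable def minorPoly {n s : ℕ} (ρ γ : Fin s → Fin n) :
    MvPolynomial (Fin n × Fin n) ℂ :=
  ∑ σ : Equiv.Perm (Fin s),
    MvPolynomial.C ((Equiv.Perm.sign σ : ℤ) : ℂ) * ∏ i, MvPolynomial.X (ρ (σ i), γ i)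

lemma minorPoly_eval {n s : ℕ} (ρ γ : Fin s → Fin n) (M : Matrix (Fin n) (Fin n) ℂ) :
    MvPolynomial.eval (fun ij => M ij.1 ij.2) (minorPoly ρ γ) = (M.submatrix ρ γ).det := by
  rw [Matrix.det_apply', minorPoly, map_sum]
  refine Finset.sum_congr rfl fun σ _ => ?_
  rw [_root_.map_mul, MvPolynomial.eval_C, map_prod]
  simp [Matrix.submatrix_apply]

/-- Corner of a congruence by an upper-triangular matrix factors through corners. -/
lemma corner_congr {n : ℕ} (P B : Matrix (Fin n) (Fin n) ℂ)
    (hB : ∀ i j : Fin n, j < i → B i j = 0) (k l : ℕ) :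
    cornerSub (Bᵀ * P * B) k l
      = (cornerSub B k k)ᵀ * cornerSub P k l * cornerSub B l l := by
  ext i j
  simp only [cornerSub, submatrix_apply, Matrix.mul_apply, transpose_apply]
  have hout : ∀ x : Fin n, min l n ≤ (x : ℕ) →
      (∑ y : Fin n, B y (Fin.castLE (min_le_right k n) i) * P y x) *
        B x (Fin.castLE (min_le_right l n) j) = 0 := by
    intro x hx
    rw [hB x (Fin.castLE (min_le_right l n) j)
      (by simp only [Fin.lt_def, Fin.coe_castLE]; exact lt_of_lt_of_le j.isLt hx), mul_zero]
  rw [sum_fin_castLE (min_le_right l n) _ hout]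
  refine Finset.sum_congr rfl fun x _ => ?_
  congr 1
  have hin : ∀ y : Fin n, min k n ≤ (y : ℕ) →
      B y (Fin.castLE (min_le_right k n) i) * P y (Fin.castLE (min_le_right l n) x) = 0 := by
    intro y hy
    rw [hB y (Fin.castLE (min_le_right k n) i)
      (by simp only [Fin.lt_def, Fin.coe_castLE]; exact lt_of_lt_of_le i.isLt hy), zero_mul]
  rw [sum_fin_castLE (min_le_right k n) _ hin]

theorem stmt18 {n : ℕ} (S π : Matrix (Fin n) (Fin n) ℂ) (hS : S.IsSymm)
    (hperm : IsPartialPermMatrix π) (hsym : π.IsSymm)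
    (hcl : S ∈ @closure _ (zariskiT n) (congOrbit π)) :
    ∀ k l : ℕ, 1 ≤ k → k ≤ n → 1 ≤ l → l ≤ n →
      rcEntry S k l ≤ rcEntry π k l := by
  intro k l _ _ _ _
  letI := zariskiT n
  set r := rcEntry π k l with hr
  -- the closed set defined by the vanishing of all (r+1)-minors of the corner
  let Z : ((Fin (r+1) → Fin (min k n)) × (Fin (r+1) → Fin (min l n))) →
      Set (Matrix (Fin n) (Fin n) ℂ) := fun fg =>
    { M | ((cornerSub M k l).submatrix fg.1 fg.2).det = 0 }
  have hZ_closed : ∀ fg, IsClosed (Z fg) := by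
    intro fg
    have hpoly : Z fg = { M | MvPolynomial.eval (fun ij => M ij.1 ij.2)
        (minorPoly (Fin.castLE (min_le_right k n) ∘ fg.1)
          (Fin.castLE (min_le_right l n) ∘ fg.2)) = 0 } := by
      ext M
      simp only [Z, Set.mem_setOf_eq, minorPoly_eval]
      rw [show M.submatrix (Fin.castLE (min_le_right k n) ∘ fg.1)
          (Fin.castLE (min_le_right l n) ∘ fg.2) = (cornerSub M k l).submatrix fg.1 fg.2 by
        rw [cornerSub, submatrix_submatrix]]
    rw [hpoly, ← isOpen_compl_iff]
    apply TopologicalSpace.isOpen_generateFrom_of_mem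
    refine ⟨minorPoly (Fin.castLE (min_le_right k n) ∘ fg.1)
      (Fin.castLE (min_le_right l n) ∘ fg.2), ?_⟩
    ext M; simp
  have horb : congOrbit π ⊆ ⋂ fg, Z fg := by
    rintro M ⟨B, hBdet, hBtri, rfl⟩
    have hrank : rcEntry (Bᵀ * π * B) k l ≤ r := by
      rw [rcEntry, corner_congr π B hBtri k l]
      calc ((cornerSub B k k)ᵀ * cornerSub π k l * cornerSub B l l).rank
          ≤ ((cornerSub B k k)ᵀ * cornerSub π k l).rank := Matrix.rank_mul_le_left _ _
        _ ≤ (cornerSub π k l).rank := Matrix.rank_mul_le_right _ _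
    exact Set.mem_iInter.2 fun fg => minors_vanish _ hrank fg.1 fg.2
  have hSC : S ∈ ⋂ fg, Z fg :=
    closure_minimal horb (isClosed_iInter hZ_closed) hcl
  exact rank_le_of_minors _ fun f g => Set.mem_iInter.1 hSC (f, g)
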